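/- arXiv:2011.13163 — 2 statements merged into one kernel-verified Lean document; each statement's English description precedes it below -/
import Mathlib

section
/- Closeness centrality satisfies Axiom 2 (componentwise) in the following strong form: for every network g and every non-adjacent pair of distinct vertices i, j, if j ∈ Conn_g(i) then C_close(i, g+ij) > C_close(i, g), and if j ∉ Conn_g(i) then C_close(i, g+ij) < C_close(i, g). -/
open SimpleGraph

/-- Degree of vertex `i` in network `g`. -/
noncomputable def deg {V : Type*} (g : SimpleGraph V) (i : V) : ℕ :=
  Nat.card (g.neighborSet i)

/-- The network `g` with the (missing) edge `ij` added. -/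
def addE {V : Type*} (g : SimpleGraph V) (i j : V) : SimpleGraph V :=
  g ⊔ SimpleGraph.fromEdgeSet {s(i, j)}

/-- The network `g` with the edge `ij` removed. -/
def delE {V : Type*} (g : SimpleGraph V) (i j : V) : SimpleGraph V :=
  g.deleteEdges {s(i, j)}

/-- Utility of agent `i` in the game with centralities `C` and edge cost `c`. -/
noncomputable def util {V : Type*} (C : V → SimpleGraph V → ℝ) (c : ℝ) (i : V)
    (g : SimpleGraph V) : ℝ :=
  C i g - c * (deg g i)

/-- Adding the missing edge `ij` is an improving move. -/
def ImprovingAdd {V : Type*} (C : V → SimpleGraph V → ℝ) (c : ℝ) (g : SimpleGraph V)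
    (i j : V) : Prop :=
  util C c i (addE g i j) ≥ util C c i g ∧ util C c j (addE g i j) ≥ util C c j g ∧
    (util C c i (addE g i j) > util C c i g ∨ util C c j (addE g i j) > util C c j g)

/-- Deleting the edge `ij` is an improving move. -/
def ImprovingDel {V : Type*} (C : V → SimpleGraph V → ℝ) (c : ℝ) (g : SimpleGraph V)
    (i j : V) : Prop :=
  util C c i (delE g i j) > util C c i g ∨ util C c j (delE g i j) > util C c j g

/-- `g` is pairwise stable at edge cost `c`. -/
def PairwiseStable {V : Type*} (C : V → SimpleGraph V → ℝ) (c : ℝ) (g : SimpleGraph V) : Prop :=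
  (∀ i j : V, i ≠ j → ¬ g.Adj i j → ¬ ImprovingAdd C c g i j) ∧
  (∀ i j : V, g.Adj i j → ¬ ImprovingDel C c g i j)

/-- `g` is asymptotically pairwise stable. -/
def APSN {V : Type*} (C : V → SimpleGraph V → ℝ) (g : SimpleGraph V) : Prop :=
  ∃ ε₀ : ℝ, 0 < ε₀ ∧ ∀ c : ℝ, 0 < c → c < ε₀ → PairwiseStable C c g

/-- Axiom 1: the centrality of agent `i` is increasing. -/
def Axiom1 {V : Type*} (C : V → SimpleGraph V → ℝ) (i : V) : Prop :=
  ∀ (g : SimpleGraph V) (j : V), j ≠ i → ¬ g.Adj i j → C i (addE g i j) > C i g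

/-- Axiom 1′: the centrality of agent `i` is decreasing. -/
def Axiom1' {V : Type*} (C : V → SimpleGraph V → ℝ) (i : V) : Prop :=
  ∀ (g : SimpleGraph V) (j : V), j ≠ i → ¬ g.Adj i j → C i (addE g i j) < C i g

/-- Axiom 2: the centrality of agent `i` is componentwise. -/
def Axiom2 {V : Type*} (C : V → SimpleGraph V → ℝ) (i : V) : Prop :=
  ∀ (g : SimpleGraph V) (j : V), j ≠ i → ¬ g.Adj i j →
    ((g.Reachable i j → C i (addE g i j) > C i g) ∧
     (¬ g.Reachable i j → C i (addE g i j) ≤ C i g))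

/-- Axiom 2′: the centrality of agent `i` is peripheral. -/
def Axiom2' {V : Type*} (C : V → SimpleGraph V → ℝ) (i : V) : Prop :=
  ∀ (g : SimpleGraph V) (j : V), j ≠ i → ¬ g.Adj i j →
    ((g.Reachable i j → C i (addE g i j) ≤ C i g) ∧
     (¬ g.Reachable i j → C i (addE g i j) > C i g))

/-- The centrality of agent `i` is degree homophilic with (strictly increasing) `f`. -/
def DegreeHomophilic {V : Type*} (C : V → SimpleGraph V → ℝ) (i : V) (f : ℕ → ℤ) : Prop :=
  ∀ (g : SimpleGraph V) (j : V), j ≠ i → ¬ g.Adj i j →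
    (C i (addE g i j) > C i g ↔ (deg g j : ℤ) ≤ f (deg g i))

open scoped Classical in
/-- Closeness centrality of `i` in `g`, valued in `[0,∞]` with the convention `0⁻¹ = ∞`. -/
noncomputable def closeness {V : Type*} [Fintype V] (g : SimpleGraph V) (i : V) : ENNReal :=
  (∑ j : V, if g.Reachable i j then (g.dist i j : ENNReal) else 0)⁻¹

lemma addE_adj {V : Type*} {g : SimpleGraph V} {i j a c : V} :
    (addE g i j).Adj a c ↔ g.Adj a c ∨ ((a = i ∧ c = j ∨ a = j ∧ c = i) ∧ a ≠ c) := by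
  simp [addE, sup_adj, fromEdgeSet_adj, Sym2.eq_iff]

lemma reach_down {V : Type*} {g : SimpleGraph V} {i j : V} (hr : g.Reachable i j) :
    ∀ {a b : V}, (addE g i j).Reachable a b → g.Reachable a b := by
  intro a b ⟨w⟩
  induction w with
  | nil => exact Reachable.refl _
  | cons h p ih =>
    rw [addE_adj] at h
    rcases h with h | ⟨(⟨rfl, rfl⟩ | ⟨rfl, rfl⟩), _⟩
    · exact h.reachable.trans ih
    · exact hr.trans ih
    · exact hr.symm.trans ih

lemma walkB {V : Type*} {g : SimpleGraph V} {i j : V} :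
    ∀ {a b : V} (w : (addE g i j).Walk a b),
      (∃ p : g.Walk a b, p.length ≤ w.length) ∨
      (∃ (p : g.Walk a i) (q : g.Walk j b), p.length + q.length + 1 ≤ w.length) ∨
      (∃ (p : g.Walk a j) (q : g.Walk i b), p.length + q.length + 1 ≤ w.length) := by
  intro a b w
  induction w with
  | nil => exact Or.inl ⟨Walk.nil, le_rfl⟩
  | @cons a c b h w ih =>
    rw [addE_adj] at h
    rcases h with h | ⟨(⟨rfl, rfl⟩ | ⟨rfl, rfl⟩), _⟩
    · rcases ih with ⟨p, hp⟩ | ⟨p, q, hpq⟩ | ⟨p, q, hpq⟩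
      · exact Or.inl ⟨Walk.cons h p, by simp; omega⟩
      · exact Or.inr (Or.inl ⟨Walk.cons h p, q, by simp; omega⟩)
      · exact Or.inr (Or.inr ⟨Walk.cons h p, q, by simp; omega⟩)
    · rcases ih with ⟨p, hp⟩ | ⟨p, q, hpq⟩ | ⟨p, q, hpq⟩
      · exact Or.inr (Or.inl ⟨Walk.nil, p, by simp; omega⟩)
      · exact Or.inr (Or.inl ⟨Walk.nil, q, by simp; omega⟩)
      · exact Or.inl ⟨q, by simp; omega⟩
    · rcases ih with ⟨p, hp⟩ | ⟨p, q, hpq⟩ | ⟨p, q, hpq⟩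
      · exact Or.inr (Or.inr ⟨Walk.nil, p, by simp; omega⟩)
      · exact Or.inl ⟨q, by simp; omega⟩
      · exact Or.inr (Or.inr ⟨Walk.nil, q, by simp; omega⟩)

lemma dist_addE_le {V : Type*} {g : SimpleGraph V} {i j k : V} (hk : g.Reachable i k) :
    (addE g i j).dist i k ≤ g.dist i k := by
  obtain ⟨p, hp⟩ := hk.exists_walk_length_eq_dist
  calc (addE g i j).dist i k ≤ (p.mapLe le_sup_left).length := dist_le _
    _ = g.dist i k := by simpa using hp

lemma dist_addE_eq {V : Type*} {g : SimpleGraph V} {i j k : V} (hnr : ¬ g.Reachable i j)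
    (hk : g.Reachable i k) : (addE g i j).dist i k = g.dist i k := by
  refine le_antisymm (dist_addE_le hk) ?_
  obtain ⟨w, hw⟩ := (hk.mono le_sup_left : (addE g i j).Reachable i k).exists_walk_length_eq_dist
  rcases walkB w with ⟨p, hp⟩ | ⟨p, q, hpq⟩ | ⟨p, q, hpq⟩
  · calc g.dist i k ≤ p.length := dist_le _
      _ ≤ w.length := hp
      _ = _ := hw
  · exact absurd (hk.trans q.reachable.symm) hnr
  · exact absurd p.reachable hnr


theorem statement_1 {V : Type*} [Fintype V] (g : SimpleGraph V) (i j : V)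
    (hij : i ≠ j) (hadj : ¬ g.Adj i j) :
    (g.Reachable i j → closeness (addE g i j) i > closeness g i) ∧
    (¬ g.Reachable i j → closeness (addE g i j) i < closeness g i) := by
  classical
  have hle : g ≤ addE g i j := le_sup_left
  have adjNew : (addE g i j).Adj i j := addE_adj.mpr (Or.inr ⟨Or.inl ⟨rfl, rfl⟩, hij⟩)
  have hfin : ∀ (g' : SimpleGraph V),
      (∑ k ∈ Finset.univ.erase j, if g'.Reachable i k then (g'.dist i k : ENNReal) else 0) ≠ ⊤ := by
    intro g'
    refine (ENNReal.sum_lt_top.2 fun k _ => ?_).ne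
    split <;> simp
  simp only [closeness]
  constructor
  · intro hr
    rw [gt_iff_lt, ENNReal.inv_lt_inv]
    rw [← Finset.add_sum_erase _ _ (Finset.mem_univ j),
        ← Finset.add_sum_erase _ _ (Finset.mem_univ j)]
    refine ENNReal.add_lt_add_of_lt_of_le (hfin _) ?_ ?_
    · rw [if_pos adjNew.reachable, if_pos hr]
      refine Nat.cast_lt.mpr ?_
      have h1 : (addE g i j).dist i j = 1 := dist_eq_one_iff_adj.mpr adjNew
      have h2 : g.dist i j ≠ 1 := fun h => hadj (dist_eq_one_iff_adj.mp h)
      have h3 : 0 < g.dist i j := hr.pos_dist_of_ne hij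
      omega
    · refine Finset.sum_le_sum fun k _ => ?_
      by_cases hk : g.Reachable i k
      · rw [if_pos (hk.mono hle), if_pos hk]
        exact Nat.cast_le.mpr (dist_addE_le hk)
      · rw [if_neg (fun h => hk (reach_down hr h)), if_neg hk]
  · intro hnr
    rw [ENNReal.inv_lt_inv]
    rw [← Finset.add_sum_erase _ _ (Finset.mem_univ j),
        ← Finset.add_sum_erase _ _ (Finset.mem_univ j)]
    refine ENNReal.add_lt_add_of_lt_of_le (hfin _) ?_ ?_
    · rw [if_pos adjNew.reachable, if_neg hnr]
      exact Nat.cast_pos.mpr (adjNew.reachable.pos_dist_of_ne hij)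
    · refine Finset.sum_le_sum fun k _ => ?_
      by_cases hk : g.Reachable i k
      · rw [if_pos (hk.mono hle), if_pos hk, dist_addE_eq hnr hk]
      · rw [if_neg hk]
        exact zero_le
end

section
/- Let f : ℕ → ℤ be strictly increasing and assume every agent's centrality is degree homophilic with f. Let g be a network and ij ∈ E(g). Then there exists c₀ > 0 such that deleting ij is an improving move at every cost c with 0 < c < c₀, if and only if deg_g(j) − 1 > f(deg_g(i) − 1) or deg_g(i) − 1 > f(deg_g(j) − 1). -/
open SimpleGraph

lemma addE_delE {V : Type*} {g : SimpleGraph V} {i j : V} (h : g.Adj i j) :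
    addE (delE g i j) i j = g := by
  have hne : i ≠ j := h.ne
  ext a b
  simp only [addE, delE, sup_adj, deleteEdges_adj, fromEdgeSet_adj, Set.mem_singleton_iff,
    Sym2.eq_iff]
  constructor
  · rintro (⟨hab, _⟩ | ⟨(⟨rfl, rfl⟩ | ⟨rfl, rfl⟩), _⟩)
    · exact hab
    · exact h
    · exact h.symm
  · intro hab
    by_cases he : (a = i ∧ b = j) ∨ (a = j ∧ b = i)
    · exact Or.inr ⟨he, hab.ne⟩
    · exact Or.inl ⟨hab, he⟩

lemma not_adj_delE {V : Type*} (g : SimpleGraph V) (i j : V) : ¬ (delE g i j).Adj i j := by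
  simp [delE, deleteEdges_adj]

lemma neighborSet_delE_left {V : Type*} {g : SimpleGraph V} {i j : V} (h : g.Adj i j) :
    (delE g i j).neighborSet i = g.neighborSet i \ {j} := by
  ext x
  simp only [mem_neighborSet, delE, deleteEdges_adj, Set.mem_singleton_iff, Sym2.eq_iff,
    Set.mem_diff]
  constructor
  · rintro ⟨hx, hn⟩
    refine ⟨hx, fun hxj => hn ?_⟩
    exact Or.inl ⟨trivial, hxj⟩
  · rintro ⟨hx, hn⟩
    refine ⟨hx, ?_⟩
    rintro (⟨-, rfl⟩ | ⟨rfl, rfl⟩)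
    · exact hn rfl
    · exact h.ne rfl

lemma deg_delE_left {V : Type*} [Fintype V] {g : SimpleGraph V} {i j : V} (h : g.Adj i j) :
    deg (delE g i j) i = deg g i - 1 := by
  have := neighborSet_delE_left h
  rw [deg, deg, this]
  rw [Nat.card_coe_set_eq, Nat.card_coe_set_eq,
    Set.ncard_diff_singleton_of_mem (show j ∈ g.neighborSet i from h)]

lemma addE_comm {V : Type*} (g : SimpleGraph V) (i j : V) : addE g i j = addE g j i := by
  rw [addE, addE, Sym2.eq_swap]

lemma delE_comm {V : Type*} (g : SimpleGraph V) (i j : V) : delE g i j = delE g j i := by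
  rw [delE, delE, Sym2.eq_swap]

theorem statement_7 {V : Type*} [Fintype V] (C : V → SimpleGraph V → ℝ) (f : ℕ → ℤ)
    (hf : StrictMono f) (hC : ∀ i, DegreeHomophilic C i f)
    (g : SimpleGraph V) (i j : V) (hadj : g.Adj i j) :
    (∃ c₀ : ℝ, 0 < c₀ ∧ ∀ c : ℝ, 0 < c → c < c₀ → ImprovingDel C c g i j) ↔
      ((deg g j : ℤ) - 1 > f (deg g i - 1) ∨ (deg g i : ℤ) - 1 > f (deg g j - 1)) := by
  set g' := delE g i j with hg'
  have hne : i ≠ j := hadj.ne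
  have hA : addE g' i j = g := addE_delE hadj
  have hA' : addE g' j i = g := by rw [← addE_comm]; exact hA
  have hdi : deg g' i = deg g i - 1 := deg_delE_left hadj
  have hdj : deg g' j = deg g j - 1 := by
    rw [hg', delE_comm]; exact deg_delE_left hadj.symm
  have h1i : 1 ≤ deg g i := by
    have hmem : j ∈ g.neighborSet i := hadj
    exact Nat.card_pos_iff.mpr ⟨Set.nonempty_coe_sort.mpr ⟨j, hmem⟩, Set.toFinite _⟩
  have h1j : 1 ≤ deg g j := by
    have hmem : i ∈ g.neighborSet j := hadj.symm
    have hpos : 0 < Nat.card (g.neighborSet j) :=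
      Nat.card_pos_iff.mpr ⟨Set.nonempty_coe_sort.mpr ⟨i, hmem⟩, Set.toFinite _⟩
    exact hpos
  -- integer casts
  have hcastj : ((deg g' j : ℤ)) = (deg g j : ℤ) - 1 := by
    rw [hdj]; push_cast [Nat.cast_sub h1j]; ring
  have hcasti : ((deg g' i : ℤ)) = (deg g i : ℤ) - 1 := by
    rw [hdi]; push_cast [Nat.cast_sub h1i]; ring
  have hna : ¬ g'.Adj i j := not_adj_delE g i j
  have hna' : ¬ g'.Adj j i := fun h => hna h.symm
  have hCi : C i g > C i g' ↔ (deg g j : ℤ) - 1 ≤ f (deg g i - 1) := by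
    have := (hC i) g' j hne.symm hna
    rw [hA, hcastj, hdi] at this; exact this
  have hCj : C j g > C j g' ↔ (deg g i : ℤ) - 1 ≤ f (deg g j - 1) := by
    have := (hC j) g' i hne hna'
    rw [hA', hcasti, hdj] at this; exact this
  -- utility difference characterization
  have hreal_i : ((deg g' i : ℕ) : ℝ) = (deg g i : ℝ) - 1 := by
    rw [hdi, Nat.cast_sub h1i]; simp
  have hreal_j : ((deg g' j : ℕ) : ℝ) = (deg g j : ℝ) - 1 := by
    rw [hdj, Nat.cast_sub h1j]; simp
  have hutil : ∀ c : ℝ, ImprovingDel C c g i j ↔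
      (C i g' + c > C i g ∨ C j g' + c > C j g) := by
    intro c
    unfold ImprovingDel util
    rw [← hg', hreal_i, hreal_j]
    constructor
    · rintro (h | h)
      · left; nlinarith
      · right; nlinarith
    · rintro (h | h)
      · left; nlinarith
      · right; nlinarith
  constructor
  · rintro ⟨c₀, hc₀, hall⟩
    by_contra hcon
    push_neg at hcon
    obtain ⟨h1, h2⟩ := hcon
    have hi' : C i g > C i g' := hCi.mpr h1
    have hj' : C j g > C j g' := hCj.mpr h2
    set δ := min c₀ (min (C i g - C i g') (C j g - C j g')) with hδ
    have hδpos : 0 < δ := by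
      apply lt_min hc₀ (lt_min (by linarith) (by linarith))
    have := hall (δ / 2) (by linarith) (by
      have : δ ≤ c₀ := min_le_left _ _
      linarith)
    rw [hutil] at this
    have hd1 : δ ≤ C i g - C i g' := le_trans (min_le_right _ _) (min_le_left _ _)
    have hd2 : δ ≤ C j g - C j g' := le_trans (min_le_right _ _) (min_le_right _ _)
    rcases this with h | h
    · linarith
    · linarith
  · intro h
    refine ⟨1, one_pos, fun c hc _ => ?_⟩
    rw [hutil]
    rcases h with h | h
    · left
      have : ¬ (C i g > C i g') := by rw [hCi]; omega
      push_neg at this; linarith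
    · right
      have : ¬ (C j g > C j g') := by rw [hCj]; omega
      push_neg at this; linarith
end
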